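/- For every integer k ≥ 1, the value of the interpolation polynomial r_{(k)} at x = 1 is given by r_{(k)}(1) = (−1)^k · 2^{−(2k−1)} · ((2k−3)!!/(k−1)!) · Σ_{i=0}^{k} (2i−1)·C(2k+1, 2i+1). -/

import Mathlib

open Polynomial

open Finset

lemma df_odd_succ (n : ℕ) :
    Nat.doubleFactorial (2*n+1) = (2*n+1) * Nat.doubleFactorial (2*n-1) := by
  cases n with
  | zero => rfl
  | succ m =>
    have h1 : 2*(m+1)+1 = (2*m+1)+2 := by ring
    have h2 : 2*(m+1)-1 = 2*m+1 := by omega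
    rw [h1, h2, Nat.doubleFactorial_add_two]

lemma fact_two_mul (n : ℕ) :
    (2*n).factorial = 2^n * n.factorial * Nat.doubleFactorial (2*n-1) := by
  induction n with
  | zero => rfl
  | succ m ih =>
    have h1 : 2*(m+1) = (2*m+1)+1 := by ring
    have h2 : 2*(m+1)-1 = 2*m+1 := by omega
    rw [h2, h1, Nat.factorial_succ, Nat.factorial_succ, ih, df_odd_succ,
      Nat.factorial_succ, pow_succ]
    ring

lemma fact_two_mul_add_one (n : ℕ) :
    (2*n+1).factorial = 2^n * n.factorial * Nat.doubleFactorial (2*n+1) := by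
  rw [Nat.factorial_succ, fact_two_mul, df_odd_succ]
  ring

lemma prod_odd (n : ℕ) :
    ∏ t ∈ range n, (2*(t:ℚ)+1) = (Nat.doubleFactorial (2*n-1) : ℚ) := by
  induction n with
  | zero => simp
  | succ m ih =>
    rw [prod_range_succ, ih, show 2*(m+1)-1 = 2*m+1 from by omega, df_odd_succ]
    push_cast
    ring

lemma prod_half (n : ℕ) :
    ∏ t ∈ range n, ((t:ℚ)+1/2) = (Nat.doubleFactorial (2*n-1) : ℚ)/2^n := by
  have h : ∀ t ∈ range n, ((t:ℚ)+1/2) = (2*(t:ℚ)+1)/2 := fun t _ => by ring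
  rw [Finset.prod_congr rfl h, Finset.prod_div_distrib, prod_odd, prod_const, card_range]

lemma asc_half (n : ℕ) :
    (ascPochhammer ℚ n).eval (1/2 : ℚ) = (Nat.doubleFactorial (2*n-1) : ℚ)/2^n := by
  induction n with
  | zero => simp
  | succ m ih =>
    rw [ascPochhammer_succ_right, eval_mul, ih, show 2*(m+1)-1 = 2*m+1 from by omega,
      df_odd_succ]
    simp only [eval_add, eval_X, eval_natCast]
    push_cast
    field_simp
    ring

lemma prod_fact1 (n : ℕ) :
    ∏ t ∈ range n, ((t:ℚ)+1) = (n.factorial : ℚ) := by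
  induction n with
  | zero => simp
  | succ m ih => rw [prod_range_succ, ih, Nat.factorial_succ]; push_cast; ring

lemma prod_fact2 (n : ℕ) :
    ∏ t ∈ range n, ((t:ℚ)+2) = ((n+1).factorial : ℚ) := by
  induction n with
  | zero => simp
  | succ m ih =>
    have h : ((m+1+1).factorial : ℚ) = ((m+1).factorial : ℚ) * ((m:ℚ)+2) := by
      rw [Nat.factorial_succ]; push_cast; ring
    rw [prod_range_succ, ih, h]

lemma prod_neg_half (n : ℕ) :
    ∏ t ∈ range n, ((t:ℚ) - n + 1/2) = (-1)^n * (Nat.doubleFactorial (2*n-1):ℚ)/2^n := by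
  rw [← Finset.prod_range_reflect]
  have h : ∀ t ∈ range n, (((n - 1 - t : ℕ):ℚ) - n + 1/2) = -((t:ℚ)+1/2) := by
    intro t ht
    rw [mem_range] at ht
    have : ((n - 1 - t : ℕ):ℚ) = (n:ℚ) - 1 - t := by
      have : n - 1 - t + (1 + t) = n := by omega
      have := congrArg (Nat.cast : ℕ → ℚ) this
      push_cast at this
      linarith
    rw [this]; ring
  rw [Finset.prod_congr rfl h]
  have : ∀ t ∈ range n, -((t:ℚ)+1/2) = (-1) * ((t:ℚ)+1/2) := fun t _ => by ring
  rw [Finset.prod_congr rfl this, Finset.prod_mul_distrib, prod_const, card_range, prod_half]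
  ring

lemma prod_shift (n j : ℕ) (hj : j ≤ n) :
    ∏ t ∈ range n, ((t:ℚ) - j + 1/2)
      = (-1)^j * (Nat.doubleFactorial (2*j-1):ℚ) * (Nat.doubleFactorial (2*(n-j)-1):ℚ) / 2^n := by
  rw [range_eq_Ico, ← Finset.prod_Ico_consecutive _ (Nat.zero_le j) hj, ← range_eq_Ico]
  rw [Finset.prod_Ico_eq_prod_range]
  have h2 : ∀ t ∈ range (n - j), ((j + t : ℕ):ℚ) - j + 1/2 = (t:ℚ) + 1/2 := by
    intro t _; push_cast; ring
  rw [Finset.prod_congr rfl h2, prod_half, prod_neg_half]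
  have hpow : (2:ℚ)^j * 2^(n-j) = 2^n := by
    rw [← pow_add]; congr 1; omega
  field_simp
  rw [← hpow]

lemma prod_sub (i k : ℕ) (hi : i ≤ k) :
    ∏ l ∈ (range (k+1)).erase i, ((l:ℚ) - i)
      = (-1)^i * (i.factorial : ℚ) * ((k-i).factorial : ℚ) := by
  have hset : (range (k+1)).erase i = range i ∪ Ico (i+1) (k+1) := by
    ext x; simp only [mem_erase, mem_range, mem_union, mem_Ico]; omega
  have hdisj : Disjoint (range i) (Ico (i+1) (k+1)) := by
    simp only [Finset.disjoint_left, mem_range, mem_Ico]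
    intro x hx; omega
  rw [hset, Finset.prod_union hdisj]
  have hA : ∏ l ∈ range i, ((l:ℚ) - i) = (-1)^i * (i.factorial : ℚ) := by
    rw [← Finset.prod_range_reflect]
    have h : ∀ t ∈ range i, (((i - 1 - t : ℕ):ℚ) - i) = (-1) * ((t:ℚ)+1) := by
      intro t ht
      rw [mem_range] at ht
      have hc : ((i - 1 - t : ℕ):ℚ) = (i:ℚ) - 1 - t := by
        have h' : i - 1 - t + (1 + t) = i := by omega
        have := congrArg (Nat.cast : ℕ → ℚ) h'
        push_cast at this
        linarith
      rw [hc]; ring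
    rw [Finset.prod_congr rfl h, Finset.prod_mul_distrib, prod_const, card_range, prod_fact1]
  have hB : ∏ l ∈ Ico (i+1) (k+1), ((l:ℚ) - i) = ((k-i).factorial : ℚ) := by
    rw [Finset.prod_Ico_eq_prod_range]
    have h : ∀ t ∈ range (k+1-(i+1)), ((i+1+t : ℕ):ℚ) - i = (t:ℚ) + 1 := by
      intro t _; push_cast; ring
    rw [Finset.prod_congr rfl h, show k+1-(i+1) = k-i from by omega, prod_fact1]
  rw [hA, hB]

lemma prod_half_erase (i k : ℕ) (hi : i ≤ k) :
    ∏ l ∈ (range (k+1)).erase i, ((l:ℚ)+1/2)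
      = (Nat.doubleFactorial (2*k+1):ℚ) / (2^(k+1) * ((i:ℚ)+1/2)) := by
  have hmem : i ∈ range (k+1) := by rw [mem_range]; omega
  have h := Finset.mul_prod_erase (range (k+1)) (fun l => ((l:ℚ)+1/2)) hmem
  have hfull : ∏ l ∈ range (k+1), ((l:ℚ)+1/2)
      = (Nat.doubleFactorial (2*k+1):ℚ)/2^(k+1) := by
    rw [prod_half, show 2*(k+1)-1 = 2*k+1 from by omega]
  have hne : ((i:ℚ)+1/2) ≠ 0 := by positivity
  rw [hfull] at h
  field_simp at h ⊢
  linarith [h]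

lemma prod_t32_zero (n : ℕ) :
    ∏ t ∈ range n, ((t:ℚ)+3/2) = (Nat.doubleFactorial (2*n+1):ℚ)/2^n := by
  have h := prod_half (n+1)
  rw [Finset.prod_range_succ'] at h
  have h2 : ∀ t ∈ range n, (((t+1 : ℕ)):ℚ) + 1/2 = (t:ℚ) + 3/2 := by
    intro t _; push_cast; ring
  rw [Finset.prod_congr rfl h2, show 2*(n+1)-1 = 2*n+1 from by omega] at h
  push_cast at h
  rw [pow_succ] at h
  field_simp at h ⊢
  rw [Finset.prod_congr rfl (fun (x : ℕ) _ => show ((x:ℚ)*2+3)/2 = (2*(x:ℚ)+3)/2 by ring)] at h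
  linarith

lemma df_chain (n : ℕ) (hn : 1 ≤ n) :
    (Nat.doubleFactorial (2*n+1) : ℚ)
      = (2*(n:ℚ)+1) * (2*(n:ℚ)-1) * (Nat.doubleFactorial (2*n-3) : ℚ) := by
  rw [df_odd_succ n, show 2*n-1 = 2*(n-1)+1 from by omega, df_odd_succ (n-1),
    show 2*(n-1)-1 = 2*n-3 from by omega]
  push_cast [Nat.cast_sub hn]
  ring

lemma neg_one_pow_inv (n : ℕ) : (((-1:ℚ)^n))⁻¹ = (-1:ℚ)^n := by
  rw [← inv_pow]; norm_num

set_option maxHeartbeats 2000000 in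
lemma term_pos (j M : ℕ) :
    (((-1:ℚ)^(j+M) * 2^(j+M))⁻¹ * ((Nat.doubleFactorial (2*(j+M)-1) : ℚ)/2^(j+M))
        / (((j+M).factorial : ℚ)))
      * (((((-1:ℚ)^(j+1) * (((j+1).factorial : ℚ)) * ((M.factorial : ℚ))))⁻¹
            * ((Nat.doubleFactorial (2*j+2*M+3):ℚ) / (2^(j+M+2) * (((j:ℚ)+1)+1/2))))
         * ((((-1:ℚ)^j * (Nat.doubleFactorial (2*j-1):ℚ) * (Nat.doubleFactorial (2*M-1):ℚ)
              / 2^(j+M)))⁻¹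
            * ((j+M+1).factorial : ℚ)))
    = (-1 : ℚ) ^ (j+M+1) * ((2 : ℚ) ^ (2*j+2*M+1))⁻¹
        * ((Nat.doubleFactorial (2*(j+M)-1) : ℚ) / ((j+M).factorial : ℚ))
        * ((2*((j:ℚ)+1) - 1) * (((2*j+2*M+3).factorial : ℚ)
             / (((2*j+3).factorial : ℚ) * (((2*M).factorial : ℚ)))))  := by
  have f1 : ((2*j+2*M+3).factorial : ℚ)
      = 2^(j+M+1) * ((j+M+1).factorial : ℚ) * (Nat.doubleFactorial (2*j+2*M+3) : ℚ) := by
    have := fact_two_mul_add_one (j+M+1)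
    rw [show 2*(j+M+1)+1 = 2*j+2*M+3 from by omega] at this
    exact_mod_cast this
  have f2 : ((2*j+3).factorial : ℚ)
      = 2^(j+1) * (((j+1).factorial : ℚ)) * (Nat.doubleFactorial (2*j+3) : ℚ) := by
    have := fact_two_mul_add_one (j+1)
    rw [show 2*(j+1)+1 = 2*j+3 from by omega] at this
    exact_mod_cast this
  have f3 : (((2*M).factorial : ℚ))
      = 2^M * ((M.factorial : ℚ)) * (Nat.doubleFactorial (2*M-1) : ℚ) := by
    exact_mod_cast fact_two_mul M
  have d1 : (Nat.doubleFactorial (2*j+2*M+3) : ℚ)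
      = (2*((j:ℚ)+(M:ℚ)+1)+1) * (2*((j:ℚ)+(M:ℚ)+1)-1) * (Nat.doubleFactorial (2*(j+M)-1) : ℚ) := by
    have := df_chain (j+M+1) (by omega)
    rw [show 2*(j+M+1)+1 = 2*j+2*M+3 from by omega,
        show 2*(j+M+1)-3 = 2*(j+M)-1 from by omega] at this
    rw [this]; push_cast; ring
  have d2 : (Nat.doubleFactorial (2*j+3) : ℚ)
      = (2*((j:ℚ)+1)+1) * (2*((j:ℚ)+1)-1) * (Nat.doubleFactorial (2*j-1) : ℚ) := by
    have := df_chain (j+1) (by omega)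
    rw [show 2*(j+1)+1 = 2*j+3 from by omega, show 2*(j+1)-3 = 2*j-1 from by omega] at this
    rw [this]; push_cast; ring
  rw [f1, f2, f3, d1, d2]
  rw [mul_inv, neg_one_pow_inv (j+M), pow_succ (-1:ℚ) (j+M)]
  have hF1 : (((j+M).factorial : ℚ)) ≠ 0 := by positivity
  have hF2 : (((j+1).factorial : ℚ)) ≠ 0 := by positivity
  have hF3 : ((M.factorial : ℚ)) ≠ 0 := by positivity
  have hF4 : (((j+M+1).factorial : ℚ)) ≠ 0 := by positivity
  have hD : (Nat.doubleFactorial (2*(j+M)-1) : ℚ) ≠ 0 := by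
    exact_mod_cast (Nat.doubleFactorial_pos _).ne'
  have hD1 : (Nat.doubleFactorial (2*j-1) : ℚ) ≠ 0 := by
    exact_mod_cast (Nat.doubleFactorial_pos _).ne'
  have hD2 : (Nat.doubleFactorial (2*M-1) : ℚ) ≠ 0 := by
    exact_mod_cast (Nat.doubleFactorial_pos _).ne'
  have hx1 : (2*((j:ℚ)+1)+1) ≠ 0 := by positivity
  have hx2 : (2*((j:ℚ)+1)-1) ≠ 0 := by
    have : (2*((j:ℚ)+1)-1) = 2*(j:ℚ)+1 := by ring
    rw [this]; positivity
  have hx3 : (2*((j:ℚ)+(M:ℚ)+1)+1) ≠ 0 := by positivity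
  have hx4 : (2*((j:ℚ)+(M:ℚ)+1)-1) ≠ 0 := by
    have : (2*((j:ℚ)+(M:ℚ)+1)-1) = 2*(j:ℚ)+2*(M:ℚ)+1 := by ring
    rw [this]; positivity
  have hx5 : ((j:ℚ)+1+1/2) ≠ 0 := by positivity
  rcases Nat.even_or_odd j with hj | hj
  · rw [Odd.neg_one_pow (Even.add_one hj), Even.neg_one_pow hj]
    field_simp
    ring
  · rw [Even.neg_one_pow (Odd.add_one hj), Odd.neg_one_pow hj]
    field_simp
    ring

def vmap (k : ℕ) : ℕ → ℚ := fun j => if j ≤ k then 1/2 - (j:ℚ) else (k:ℚ) - j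

set_option maxHeartbeats 2000000 in
lemma term_main (k i : ℕ) (hk : 1 ≤ k) (hi : i ≤ k) :
    ((-2 : ℚ) ^ (-((k : ℤ) - 1)) * (ascPochhammer ℚ (k - 1)).eval (1 / 2) / ((k - 1).factorial : ℚ))
      * ∏ l ∈ (Finset.range (2*k)).erase i, ((vmap k i - vmap k l)⁻¹ * (1 - vmap k l))
    = (-1 : ℚ) ^ k * ((2 : ℚ) ^ (2 * k - 1))⁻¹
        * ((Nat.doubleFactorial (2 * k - 3) : ℚ) / ((k - 1).factorial : ℚ))
        * ((2 * (i : ℚ) - 1) * (Nat.choose (2 * k + 1) (2 * i + 1) : ℚ)) := by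
  have hvi : vmap k i = 1/2 - (i:ℚ) := if_pos hi
  have hset : (Finset.range (2*k)).erase i
      = ((Finset.range (k+1)).erase i) ∪ Finset.Ico (k+1) (2*k) := by
    ext x; simp only [mem_erase, mem_range, mem_union, mem_Ico]; omega
  have hdisj : Disjoint ((Finset.range (k+1)).erase i) (Finset.Ico (k+1) (2*k)) := by
    simp only [Finset.disjoint_left, mem_erase, mem_range, mem_Ico]
    intro x hx; omega
  rw [hset, Finset.prod_union hdisj]
  have h1 : ∀ l ∈ (Finset.range (k+1)).erase i,
      (vmap k i - vmap k l)⁻¹ * (1 - vmap k l) = ((l:ℚ) - i)⁻¹ * ((l:ℚ) + 1/2) := by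
    intro l hl
    simp only [mem_erase, mem_range] at hl
    have hvl : vmap k l = 1/2 - (l:ℚ) := if_pos (by omega)
    rw [hvl, hvi, show (1/2 - (i:ℚ)) - (1/2 - (l:ℚ)) = (l:ℚ) - i from by ring,
      show (1:ℚ) - (1/2 - (l:ℚ)) = (l:ℚ) + 1/2 from by ring]
  rw [Finset.prod_congr rfl h1, Finset.prod_Ico_eq_prod_range]
  have h2 : ∀ t ∈ Finset.range (2*k - (k+1)),
      (vmap k i - vmap k (k+1+t))⁻¹ * (1 - vmap k (k+1+t))
        = ((t:ℚ) + 3/2 - i)⁻¹ * ((t:ℚ) + 2) := by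
    intro t _
    have hvl : vmap k (k+1+t) = (k:ℚ) - ((k+1+t : ℕ) : ℚ) := if_neg (by omega)
    have he : (k:ℚ) - ((k+1+t : ℕ) : ℚ) = -1 - t := by push_cast; ring
    rw [hvl, hvi, he, show (1/2 - (i:ℚ)) - (-1 - (t:ℚ)) = (t:ℚ) + 3/2 - i from by ring,
      show (1:ℚ) - (-1 - (t:ℚ)) = (t:ℚ) + 2 from by ring]
  rw [Finset.prod_congr rfl h2, show 2*k - (k+1) = k-1 from by omega]
  rw [Finset.prod_mul_distrib, Finset.prod_mul_distrib, Finset.prod_inv_distrib,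
    Finset.prod_inv_distrib]
  rw [prod_sub i k hi, prod_half_erase i k hi, prod_fact2 (k-1),
    show (k-1)+1 = k from by omega]
  have hc : (-2:ℚ)^(-((k:ℤ)-1)) = ((-1:ℚ)^(k-1) * 2^(k-1))⁻¹ := by
    have h1' : -((k : ℤ) - 1) = -(((k-1 : ℕ) : ℤ)) := by
      push_cast [Nat.cast_sub hk]; ring
    rw [h1', zpow_neg, zpow_natCast, neg_pow]
  rw [hc, asc_half (k-1)]
  rcases Nat.eq_zero_or_pos i with rfl | hi1
  · -- case i = 0
    obtain ⟨K, hK⟩ := Nat.exists_eq_add_of_le hk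
    have hK' : k = K+1 := by omega
    subst hK'
    have e3 : ∀ t ∈ Finset.range (K+1-1), ((t:ℚ) + 3/2 - ((0:ℕ):ℚ)) = ((t:ℚ) + 3/2) := by
      intro t _; push_cast; ring
    rw [Finset.prod_congr rfl e3, prod_t32_zero]
    rw [show 2*0+1 = 1 from rfl, Nat.choose_one_right]
    simp only [show (K+1)-1 = K from by omega, show 2*(K+1)-3 = 2*K-1 from by omega,
      show 2*(K+1)-1 = 2*K+1 from by omega, show 2*(K+1)+1 = 2*K+3 from by omega,
      show 2*K+1+1 = 2*K+2 from by omega,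
      show (K+1)+1 = K+2 from by omega, show (K+1)-0 = K+1 from by omega,
      Nat.factorial_zero, pow_zero, Nat.cast_zero]
    have hd : (Nat.doubleFactorial (2*K+3) : ℚ) = (2*(K:ℚ)+3) * (Nat.doubleFactorial (2*K+1) : ℚ) := by
      have := df_odd_succ (K+1)
      rw [show 2*(K+1)+1 = 2*K+3 from by omega, show 2*(K+1)-1 = 2*K+1 from by omega] at this
      rw [this]; push_cast; ring
    rw [hd, mul_inv, neg_one_pow_inv K, pow_succ (-1:ℚ) K]
    have hF : ((K.factorial : ℚ)) ≠ 0 := by positivity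
    have hF2 : (((1+K).factorial : ℚ)) ≠ 0 := by positivity
    have hD : (Nat.doubleFactorial (2*K-1) : ℚ) ≠ 0 := by
      exact_mod_cast (Nat.doubleFactorial_pos _).ne'
    have hD1 : (Nat.doubleFactorial (2*K+1) : ℚ) ≠ 0 := by
      exact_mod_cast (Nat.doubleFactorial_pos _).ne'
    push_cast
    field_simp
    ring
  · -- case 1 ≤ i
    obtain ⟨j, hj⟩ := Nat.exists_eq_add_of_le hi1
    have hj' : i = j+1 := by omega
    subst hj'
    obtain ⟨M, hM⟩ := Nat.exists_eq_add_of_le hi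
    have hM' : k = j+M+1 := by omega
    subst hM'
    have e3' : ∀ t ∈ Finset.range ((j+M+1)-1),
        ((t:ℚ) + 3/2 - ((j+1 : ℕ):ℚ)) = ((t:ℚ) - (((j+1)-1 : ℕ):ℚ) + 1/2) := by
      intro t _
      rw [show (j+1)-1 = j from by omega]
      push_cast; ring
    rw [Finset.prod_congr rfl e3', prod_shift ((j+M+1)-1) ((j+1)-1) (by omega)]
    have hch : ((Nat.choose (2*(j+M+1)+1) (2*(j+1)+1)) : ℚ)
        = ((2*j+2*M+3).factorial : ℚ) / (((2*j+3).factorial : ℚ) * (((2*M).factorial : ℚ))) := by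
      rw [Nat.cast_choose ℚ (by omega : 2*(j+1)+1 ≤ 2*(j+M+1)+1)]
      rw [show 2*(j+M+1)+1 = 2*j+2*M+3 from by omega, show 2*(j+1)+1 = 2*j+3 from by omega,
        show 2*j+2*M+3 - (2*j+3) = 2*M from by omega]
    rw [hch]
    simp only [show (j+M+1)-1 = j+M from by omega, show (j+1)-1 = j from by omega,
      show 2*(j+M+1)-3 = 2*(j+M)-1 from by omega,
      show 2*(j+M+1)-1 = 2*j+2*M+1 from by omega,
      show 2*(j+M+1)+1 = 2*j+2*M+3 from by omega,
      show (j+M)-j = M from by omega,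
      show (j+M+1) - (j+1) = M from by omega,
      show (j+M+1)+1 = j+M+2 from by omega]
    push_cast
    linear_combination term_pos j M
/-- The defining interpolation conditions of the polynomial `r_{(k)}` (`k ≥ 1`):
degree `≤ 2k−1`, zeros at `−1, …, −(k−1)`, and value
`(−2)^{−(k−1)}·(1/2)_{k−1}/(k−1)!` at the points `1/2 − i` for `i = 0, 1, …, k`. -/
def rCond (k : ℕ) (p : Polynomial ℚ) : Prop :=
  p.natDegree ≤ 2 * k - 1 ∧
  (∀ i : ℕ, 1 ≤ i → i ≤ k - 1 → p.eval (-(i : ℚ)) = 0) ∧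
  (∀ i : ℕ, i ≤ k →
    p.eval (1 / 2 - (i : ℚ))
      = (-2 : ℚ) ^ (-((k : ℤ) - 1)) * (ascPochhammer ℚ (k - 1)).eval (1 / 2)
          / ((k - 1).factorial : ℚ))

/-- For every integer `k ≥ 1`, the value of the interpolation polynomial `r_{(k)}` at
`x = 1` is `r_{(k)}(1) = (−1)^k·2^{−(2k−1)}·((2k−3)!!/(k−1)!)·Σ_{i=0}^{k}(2i−1)·C(2k+1,2i+1)`. -/
theorem r_k_value_at_one (k : ℕ) (hk : 1 ≤ k) (p : Polynomial ℚ) (hp : rCond k p) :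
    p.eval 1
      = (-1 : ℚ) ^ k * ((2 : ℚ) ^ (2 * k - 1))⁻¹
          * ((Nat.doubleFactorial (2 * k - 3) : ℚ) / ((k - 1).factorial : ℚ))
          * ∑ i ∈ Finset.range (k + 1),
              (2 * (i : ℚ) - 1) * (Nat.choose (2 * k + 1) (2 * i + 1) : ℚ) := by
  obtain ⟨hdeg, hzero, hval⟩ := hp
  have hinj : Set.InjOn (vmap k) (Finset.range (2*k)) := by
    intro a _ b _ hab
    unfold vmap at hab
    by_cases h1 : a ≤ k <;> by_cases h2 : b ≤ k
    · rw [if_pos h1, if_pos h2] at hab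
      have : (a:ℚ) = b := by linarith
      exact_mod_cast this
    · rw [if_pos h1, if_neg h2] at hab
      exfalso
      have h3 : ((2*b+1 : ℕ):ℚ) = ((2*k+2*a : ℕ):ℚ) := by push_cast; linarith
      have : 2*b+1 = 2*k+2*a := by exact_mod_cast h3
      omega
    · rw [if_neg h1, if_pos h2] at hab
      exfalso
      have h3 : ((2*a+1 : ℕ):ℚ) = ((2*k+2*b : ℕ):ℚ) := by push_cast; linarith
      have : 2*a+1 = 2*k+2*b := by exact_mod_cast h3
      omega
    · rw [if_neg h1, if_neg h2] at hab
      have : (a:ℚ) = b := by linarith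
      exact_mod_cast this
  have hdeg' : p.degree < ((Finset.range (2*k)).card : ℕ) := by
    rw [Finset.card_range]
    refine lt_of_le_of_lt degree_le_natDegree ?_
    exact_mod_cast (by omega : p.natDegree < 2*k)
  have h := Lagrange.eq_interpolate hinj hdeg'
  have heval : p.eval 1
      = ∑ i ∈ Finset.range (2*k),
          p.eval (vmap k i) * ∏ l ∈ (Finset.range (2*k)).erase i,
            ((vmap k i - vmap k l)⁻¹ * (1 - vmap k l)) := by
    conv_lhs => rw [h]
    rw [Lagrange.interpolate_apply, eval_finset_sum]
    refine Finset.sum_congr rfl fun i _ => ?_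
    rw [eval_mul, eval_C, Lagrange.basis, eval_prod]
    congr 1
    refine Finset.prod_congr rfl fun l _ => ?_
    rw [Lagrange.basisDivisor]
    simp [eval_mul, eval_C, eval_sub, eval_X]
  rw [heval, Finset.range_eq_Ico,
    ← Finset.sum_Ico_consecutive _ (Nat.zero_le (k+1)) (by omega : k+1 ≤ 2*k),
    ← Finset.range_eq_Ico, ← Finset.range_eq_Ico]
  have hzero' : ∑ i ∈ Finset.Ico (k+1) (2*k),
      p.eval (vmap k i) * ∏ l ∈ (Finset.range (2*k)).erase i,
        ((vmap k i - vmap k l)⁻¹ * (1 - vmap k l)) = 0 := by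
    refine Finset.sum_eq_zero fun j hj => ?_
    rw [Finset.mem_Ico] at hj
    have hv : vmap k j = -((j-k : ℕ):ℚ) := by
      unfold vmap
      rw [if_neg (by omega)]
      push_cast [Nat.cast_sub (by omega : k ≤ j)]
      ring
    rw [hv, hzero (j-k) (by omega) (by omega), zero_mul]
  rw [hzero', add_zero, Finset.mul_sum]
  refine Finset.sum_congr rfl fun i hi => ?_
  rw [Finset.mem_range] at hi
  have hi' : i ≤ k := by omega
  have hv : vmap k i = 1/2 - (i:ℚ) := if_pos hi'
  have hc := hval i hi'
  rw [← hv] at hc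
  rw [hc]
  exact term_main k i hk hi'
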